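/- The range of the map Φ : G → M (sending a group operation on ℕ to the kernel of the canonical marking x_i ↦ i) is nowhere dense in the space M of normal subgroups of F_∞. -/

import Mathlib

/-- `G : ℕ × ℕ → ℕ` is a group operation on `ℕ`. -/
def IsGroupOp (G : ℕ × ℕ → ℕ) : Prop :=
  (∀ a b c, G (G (a, b), c) = G (a, G (b, c))) ∧
  ∃ e, (∀ a, G (e, a) = a ∧ G (a, e) = a) ∧ ∀ a, ∃ b, G (a, b) = e ∧ G (b, a) = e

/-- A copy of `ℕ` used as the carrier of the group `(ℕ, G)` associated to a group
operation `G` (a type synonym, so that the group structure induced by `G` does not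
clash with the usual arithmetic structure of `ℕ`). -/
def NatCarrier : Type := ℕ

/-- The identification of `ℕ` with `NatCarrier`. -/
def NatCarrier.mk : ℕ → NatCarrier := id

/-- The group `(ℕ, G)` induced by a group operation `G` on `ℕ`. -/
noncomputable def groupOfOp (G : ℕ × ℕ → ℕ) (h : IsGroupOp G) : Group NatCarrier where
  mul a b := NatCarrier.mk (G (a, b))
  one := NatCarrier.mk h.2.choose
  inv a := NatCarrier.mk (h.2.choose_spec.2 a).choose
  mul_assoc a b c := h.1 a b c
  one_mul a := (h.2.choose_spec.1 a).1
  mul_one a := (h.2.choose_spec.1 a).2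
  inv_mul_cancel a := (h.2.choose_spec.2 a).choose_spec.2

/-- The space of group operations on `ℕ` (topology inherited from `ℕ^(ℕ×ℕ)`). -/
abbrev GroupOpSpace : Type := {G : ℕ × ℕ → ℕ // IsGroupOp G}

/-- The kernel of the marking homomorphism `F_∞ → (ℕ, G)`, `x_i ↦ i`. -/
noncomputable def markingKer (G : ℕ × ℕ → ℕ) (h : IsGroupOp G) : Subgroup (FreeGroup ℕ) := by
  letI := groupOfOp G h
  exact (FreeGroup.lift fun i => NatCarrier.mk i).ker

lemma markingKer_normal (G : ℕ × ℕ → ℕ) (h : IsGroupOp G) : (markingKer G h).Normal := by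
  letI := groupOfOp G h
  exact MonoidHom.normal_ker _

def charSet {α : Type*} (χ : α → Bool) : Set α := {x | χ x = true}

/-- `χ` codes a normal subgroup. -/
def IsNormalSubgroupChar {α : Type*} [Group α] (χ : α → Bool) : Prop :=
  ∃ H : Subgroup α, H.Normal ∧ (H : Set α) = charSet χ

/-- The space of marked groups: normal subgroups of `F_∞` as a subspace of `2^{F_∞}`. -/
abbrev MarkedSpace : Type := {χ : FreeGroup ℕ → Bool // IsNormalSubgroupChar χ}

/-- `F_∞ ⧸ H` is isomorphic to the group `(ℕ, G)`. -/
def QuotIsoOp (H : Subgroup (FreeGroup ℕ)) (hn : H.Normal)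
    (G : ℕ × ℕ → ℕ) (hG : IsGroupOp G) : Prop := by
  haveI := hn
  letI := groupOfOp G hG
  exact Nonempty ((FreeGroup ℕ ⧸ H) ≃* NatCarrier)


lemma not_mem_markingKer (G : ℕ × ℕ → ℕ) (h : IsGroupOp G) {a b : ℕ} (hab : a ≠ b) :
    (FreeGroup.of a)⁻¹ * FreeGroup.of b ∉ markingKer G h := by
  letI := groupOfOp G h
  intro hmem
  have h1 : (FreeGroup.lift fun i => NatCarrier.mk i) ((FreeGroup.of a)⁻¹ * FreeGroup.of b) = 1 :=
    hmem
  rw [map_mul, map_inv, FreeGroup.lift_apply_of, FreeGroup.lift_apply_of, inv_mul_eq_one] at h1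
  exact hab h1

lemma lift_fix {b : ℕ} {f : ℕ → FreeGroup ℕ} (hf : ∀ k, k ≠ b → f k = FreeGroup.of k)
    (w : FreeGroup ℕ) (hw : ∀ p ∈ w.toWord, p.1 ≠ b) : FreeGroup.lift f w = w := by
  have key : FreeGroup.lift f (FreeGroup.mk w.toWord) =
      FreeGroup.lift FreeGroup.of (FreeGroup.mk w.toWord) := by
    rw [FreeGroup.lift_mk, FreeGroup.lift_mk]
    congr 1
    apply List.map_congr_left
    intro p hp
    rw [hf p.1 (hw p hp)]
  rw [FreeGroup.mk_toWord] at key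
  rw [key, FreeGroup.lift_of_apply]

/-- The range of `Φ : G → M` (sending a group operation on `ℕ` to the kernel of the
canonical marking `x_i ↦ i`) is nowhere dense in the space `M` of marked groups. -/
theorem stmt_17 :
    IsNowhereDense {N : MarkedSpace |
      ∃ G : GroupOpSpace, (markingKer G.1 G.2 : Set (FreeGroup ℕ)) = charSet N.1} := by
  rw [IsNowhereDense, Set.eq_empty_iff_forall_notMem]
  intro chi hchi
  set S := {N : MarkedSpace |
      ∃ G : GroupOpSpace, (markingKer G.1 G.2 : Set (FreeGroup ℕ)) = charSet N.1} with hS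
  obtain ⟨U, hUsub, hUopen, hchiU⟩ := mem_interior.mp hchi
  obtain ⟨O, hOopen, hOU⟩ := isOpen_induced_iff.mp hUopen
  have hchiO : chi.1 ∈ O := by rw [← hOU] at hchiU; exact hchiU
  obtain ⟨I, u, hu, hsub⟩ := isOpen_pi_iff.mp hOopen chi.1 hchiO
  set m := I.sup (fun w => (w.toWord.map Prod.fst).sum) with hm
  set g : ℕ → FreeGroup ℕ := fun k => FreeGroup.of (if k = m + 2 then m + 1 else k) with hg
  set φ : FreeGroup ℕ →* FreeGroup ℕ := FreeGroup.lift g with hφ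
  obtain ⟨H, hHnorm, hHset⟩ := chi.2
  set chi' : FreeGroup ℕ → Bool := fun w => chi.1 (φ w) with hchi'
  have hNSC : IsNormalSubgroupChar chi' := by
    refine ⟨H.comap φ, hHnorm.comap φ, ?_⟩
    rw [Subgroup.coe_comap, hHset]
    rfl
  set ψ : MarkedSpace := ⟨chi', hNSC⟩ with hψ
  -- φ fixes words whose letters are ≤ m
  have hfix : ∀ w ∈ I, φ w = w := by
    intro w hwI
    refine lift_fix (b := m + 2) (fun k hk => by simp [hg, if_neg hk]) w ?_
    intro p hp
    have h1 : p.1 ≤ (w.toWord.map Prod.fst).sum :=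
      List.single_le_sum (fun x _ => Nat.zero_le x) p.1
        (List.mem_map.mpr ⟨p, hp, rfl⟩)
    have h2 : (w.toWord.map Prod.fst).sum ≤ m :=
      Finset.le_sup (f := fun w : FreeGroup ℕ => (w.toWord.map Prod.fst).sum) hwI
    omega
  have hψU : ψ ∈ U := by
    rw [← hOU]
    refine hsub ?_
    intro i hi
    show chi.1 (φ i) ∈ u i
    rw [hfix i hi]
    exact (hu i hi).2
  have hψcl : ψ ∈ closure S := hUsub hψU
  -- the key word
  set wkey : FreeGroup ℕ := (FreeGroup.of (m + 1))⁻¹ * FreeGroup.of (m + 2) with hwkey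
  have hψkey : ψ.1 wkey = true := by
    have hone : φ wkey = 1 := by
      rw [hwkey, map_mul, map_inv, hφ, FreeGroup.lift_apply_of, FreeGroup.lift_apply_of, hg]
      simp
    show chi.1 (φ wkey) = true
    rw [hone]
    have : (1 : FreeGroup ℕ) ∈ charSet chi.1 := hHset ▸ H.one_mem
    exact this
  set T : Set MarkedSpace := {ξ : MarkedSpace | ξ.1 wkey = true} with hT
  have hTopen : IsOpen T := by
    have hc : Continuous fun ξ : MarkedSpace => ξ.1 wkey :=
      (continuous_apply wkey).comp continuous_subtype_val
    exact hc.isOpen_preimage {true} (isOpen_discrete _)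
  have hdisj : ∀ ξ ∈ S, ξ ∉ T := by
    intro ξ hξS hξT
    obtain ⟨G, hG⟩ := hξS
    have hmem : wkey ∈ (markingKer G.1 G.2 : Set (FreeGroup ℕ)) := by
      rw [hG]; exact hξT
    exact not_mem_markingKer G.1 G.2 (by omega : m + 1 ≠ m + 2) hmem
  obtain ⟨ξ, hξT, hξS⟩ := (mem_closure_iff.mp hψcl T hTopen hψkey).imp (fun ξ h => h)
  exact hdisj ξ hξS hξT
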